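/- Let g be a finite-dimensional real Lie algebra and λ ∈ g*. Let c ⊆ g be a subspace with g = g_λ ⊕ c and [g_λ, c] ⊆ c, where g_λ := {v ∈ g : λ([v,w]) = 0 for all w ∈ g}, let q : g → g_λ be the projection with kernel c, for ξ ∈ g_λ* set j(ξ) := λ + ξ∘q ∈ g*, and define the skew bilinear form η_ξ on c by η_ξ(w, w') := j(ξ)([w, w']). Then the stabilizer g_{j(ξ)} := {v ∈ g : j(ξ)([v, u]) = 0 for all u ∈ g} decomposes as the internal direct sum g_{j(ξ)} = (g_λ)_ξ ⊕ rad(η_ξ), where (g_λ)_ξ := {v ∈ g_λ : ξ([v, w]) = 0 for all w ∈ g_λ} and rad(η_ξ) := {w ∈ c : η_ξ(w, w') = 0 for all w' ∈ c}. -/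

import Mathlib

/-- Let `g` be a finite-dimensional real Lie algebra, `λ ∈ g*`, `g_λ` the coadjoint
stabilizer of `λ`, `c` an `ad(g_λ)`-invariant complement of `g_λ`, `q : g → g_λ` the
projection with kernel `c`, `j(ξ) := λ + ξ∘q`, and `η_ξ(w,w') := j(ξ)([w,w'])` on `c`.
Then the stabilizer `g_{j(ξ)}` decomposes as the internal direct sum
`g_{j(ξ)} = (g_λ)_ξ ⊕ rad(η_ξ)`. -/
theorem stabilizer_decomposition_along_slice
    {g : Type*} [LieRing g] [LieAlgebra ℝ g] [FiniteDimensional ℝ g]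
    (lam : Module.Dual ℝ g)
    (gl c : Submodule ℝ g)
    (hgl : ∀ v : g, v ∈ gl ↔ ∀ w : g, lam ⁅v, w⁆ = 0)
    (hcompl : IsCompl gl c)
    (hinv : ∀ v ∈ gl, ∀ w ∈ c, ⁅v, w⁆ ∈ c)
    (q : g →ₗ[ℝ] g)
    (hq1 : ∀ v ∈ gl, q v = v) (hq2 : ∀ w ∈ c, q w = 0)
    (ξ : Module.Dual ℝ g)
    (j : Module.Dual ℝ g) (hj : j = lam + ξ ∘ₗ q) :
    (∀ x : g, (∀ u : g, j ⁅x, u⁆ = 0) ↔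
      ∃ v w : g, (v ∈ gl ∧ ∀ v' ∈ gl, ξ (q ⁅v, v'⁆) = 0) ∧
        (w ∈ c ∧ ∀ w' ∈ c, j ⁅w, w'⁆ = 0) ∧ x = v + w) ∧
    (∀ x : g, (x ∈ gl ∧ ∀ v' ∈ gl, ξ (q ⁅x, v'⁆) = 0) →
      (x ∈ c ∧ ∀ w' ∈ c, j ⁅x, w'⁆ = 0) → x = 0) := by
  have hdec : ∀ x : g, ∃ v ∈ gl, ∃ w ∈ c, v + w = x := fun x =>
    by obtain ⟨v, w, hv, hw, h⟩ := Submodule.codisjoint_iff_exists_add_eq.mp hcompl.codisjoint x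
       exact ⟨v, hv, w, hw, h⟩
  -- key computations
  have hjval : ∀ y : g, j y = lam y + ξ (q y) := by
    intro y; rw [hj]; rfl
  have hglc : ∀ v ∈ gl, ∀ w' ∈ c, j ⁅v, w'⁆ = 0 := by
    intro v hv w' hw'
    rw [hjval, (hgl v).mp hv w', hq2 _ (hinv v hv w' hw')]
    simp
  have hcgl : ∀ w ∈ c, ∀ v' ∈ gl, j ⁅w, v'⁆ = 0 := by
    intro w hw v' hv'
    have h1 : ⁅w, v'⁆ = -⁅v', w⁆ := by rw [← lie_skew]
    rw [h1, map_neg, hglc v' hv' w hw, neg_zero]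
  have hglgl : ∀ v ∈ gl, ∀ v' : g, j ⁅v, v'⁆ = ξ (q ⁅v, v'⁆) := by
    intro v hv v'
    rw [hjval, (hgl v).mp hv v', zero_add]
  constructor
  · intro x
    constructor
    · intro hx
      obtain ⟨v, hv, w, hw, hvw⟩ := hdec x
      refine ⟨v, w, ⟨hv, ?_⟩, ⟨hw, ?_⟩, hvw.symm⟩
      · intro v' hv'
        have h := hx v'
        rw [← hvw, add_lie, map_add, hcgl w hw v' hv', add_zero,
          hglgl v hv v'] at h
        exact h
      · intro w' hw'
        have h := hx w'
        rw [← hvw, add_lie, map_add, hglc v hv w' hw', zero_add] at h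
        exact h
    · rintro ⟨v, w, ⟨hv, hv2⟩, ⟨hw, hw2⟩, rfl⟩
      intro u
      obtain ⟨v', hv', w', hw', rfl⟩ := hdec u
      rw [add_lie, lie_add, lie_add, map_add, map_add, map_add,
        hglc v hv w' hw', hcgl w hw v' hv', hw2 w' hw',
        hglgl v hv v', hv2 v' hv']
      ring
  · intro x ⟨hx1, _⟩ ⟨hx2, _⟩
    exact Submodule.disjoint_def.mp hcompl.disjoint x hx1 hx2
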